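/- Let A = ⊕_{d≥0} A_d be a commutative ℕ-graded ring with an action of a finite group G by degree-preserving ring automorphisms, and let m := A_{≥1}. Then η_G(m) ≤ β(A(G)^G), where A(G)^G carries the induced grading. -/

import Mathlib

/-- The ideal generated by the `G`-invariant elements of a (`G`-invariant) ideal `m`. -/
def invIdeal (G : Type*) {A : Type*} [Group G] [CommRing A] [MulSemiringAction G A]
    (m : Ideal A) : Ideal A :=
  Ideal.span {a : A | a ∈ m ∧ ∀ g : G, g • a = a}

/-- `η_G(m) = inf { d : m ^ d ⊆ ⟨m^G⟩ }`, as an element of `ℕ ∪ {∞}`. -/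
noncomputable def eta (G : Type*) {A : Type*} [Group G] [CommRing A] [MulSemiringAction G A]
    (m : Ideal A) : ℕ∞ :=
  sInf ((↑) '' {d : ℕ | m ^ d ≤ invIdeal G m})

/-- For a family `𝒜` of "graded pieces" of `A` and a subring `B` of `A` which is graded
with respect to `𝒜`, `beta 𝒜 B = inf {n : B is generated as a ring by its elements
lying in some `𝒜 d` with `d ≤ n`}`, as an element of `ℕ ∪ {∞}`. -/
noncomputable def beta {A : Type*} [CommRing A] (𝒜 : ℕ → Set A) (B : Subring A) : ℕ∞ :=
  sInf ((↑) '' {n : ℕ | B ≤ Subring.closure {a : A | a ∈ B ∧ ∃ d ≤ n, a ∈ 𝒜 d}})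

/-- The subring of elements fixed by a family of ring endomorphisms. -/
def fixedSubringOf {R : Type*} [CommRing R] {G : Type*} (ρ : G → R →+* R) : Subring R where
  carrier := {a : R | ∀ g : G, ρ g a = a}
  mul_mem' := by intro a b ha hb g; rw [map_mul, ha g, hb g]
  one_mem' := fun g => map_one (ρ g)
  add_mem' := by intro a b ha hb g; rw [map_add, ha g, hb g]
  zero_mem' := fun g => map_zero (ρ g)
  neg_mem' := by intro a ha g; rw [map_neg, ha g]

/-- The action of `g ∈ G` on the polynomial ring `A(G) = A[x_h : h ∈ G]`:
it acts on the coefficients through its action on `A` and permutes the variables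
by `g • x_h = x_{gh}`. -/
noncomputable def AGmap {G A : Type*} [Group G] [CommRing A] [MulSemiringAction G A]
    (g : G) : MvPolynomial G A →+* MvPolynomial G A :=
  (MvPolynomial.rename (fun h : G => g * h)).toRingHom.comp
    (MvPolynomial.map (MulSemiringAction.toRingHom G A g))

/-- The grading of `A(G) = A[x_h : h ∈ G]` extending the grading `𝒜` of `A` with
`deg x_h = 1`: the degree-`n` piece is additively generated by the monomials
`a ⬝ x^μ` with `a` homogeneous of degree `d` in `A` and `d + |μ| = n`. -/
def AGgrading {G A : Type*} [Group G] [CommRing A] (𝒜 : ℕ → AddSubgroup A) (n : ℕ) :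
    Set (MvPolynomial G A) :=
  (AddSubgroup.closure {p : MvPolynomial G A |
    ∃ (d : ℕ) (a : A) (μ : G →₀ ℕ), a ∈ 𝒜 d ∧ d + μ.sum (fun _ e => e) = n ∧
      p = MvPolynomial.monomial μ a} : AddSubgroup (MvPolynomial G A))

section EtaBetaAux

set_option linter.unusedSectionVars false

open MvPolynomial Pointwise

variable {G A : Type} [Group G] [CommRing A] [MulSemiringAction G A]

/-- The total degree of a monomial exponent. -/
def mdeg (μ : G →₀ ℕ) : ℕ := μ.sum fun _ e => e

lemma mdeg_add (μ ν : G →₀ ℕ) : mdeg (μ + ν) = mdeg μ + mdeg ν :=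
  Finsupp.sum_add_index' (fun _ => rfl) (fun _ _ _ => rfl)

lemma mdeg_zero : mdeg (0 : G →₀ ℕ) = 0 := Finsupp.sum_zero_index

lemma mdeg_single (g : G) : mdeg (Finsupp.single g 1) = 1 := by
  classical
  simpa [mdeg] using Finsupp.sum_single_index (h := fun (_ : G) (e : ℕ) => e) rfl

lemma eq_zero_of_mdeg_eq_zero {μ : G →₀ ℕ} (h : mdeg μ = 0) : μ = 0 := by
  classical
  apply Finsupp.support_eq_empty.mp
  by_contra hne
  obtain ⟨a, ha⟩ := Finset.nonempty_iff_ne_empty.mpr hne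
  exact (Finsupp.mem_support_iff.mp ha) (Finset.sum_eq_zero_iff.mp h a ha)

lemma mdeg_pos_of_ne_zero {μ : G →₀ ℕ} (h : μ ≠ 0) : 1 ≤ mdeg μ := by
  rcases Nat.eq_zero_or_pos (mdeg μ) with h0 | h1
  · exact absurd (eq_zero_of_mdeg_eq_zero h0) h
  · exact h1

lemma AGmap_monomial (g : G) (μ : G →₀ ℕ) (a : A) :
    AGmap g (monomial μ a) = monomial (Finsupp.mapDomain (fun h => g * h) μ) (g • a) := by
  show (MvPolynomial.rename (fun h : G => g * h)).toRingHom
      ((MvPolynomial.map (MulSemiringAction.toRingHom G A g)) (monomial μ a)) = _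
  rw [MvPolynomial.map_monomial]
  exact MvPolynomial.rename_monomial _ _ _

lemma constantCoeff_AGmap (g : G) (p : MvPolynomial G A) :
    constantCoeff (AGmap g p) = g • constantCoeff p := by
  show constantCoeff ((MvPolynomial.rename (fun h : G => g * h))
      ((MvPolynomial.map (MulSemiringAction.toRingHom G A g)) p)) = _
  rw [MvPolynomial.constantCoeff_rename, MvPolynomial.constantCoeff_map]
  rfl

variable (𝒜 : ℕ → AddSubgroup A) [GradedRing 𝒜]

/-- The span of the invariant homogeneous elements of positive degree. -/
def Kp (G : Type) [Group G] [MulSemiringAction G A] : Ideal A :=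
  Ideal.span {a : A | (∃ d, 1 ≤ d ∧ a ∈ 𝒜 d) ∧ ∀ g : G, g • a = a}

lemma Kp_le_invIdeal :
    Kp 𝒜 G ≤ invIdeal G (Ideal.span {a : A | ∃ d, 1 ≤ d ∧ a ∈ 𝒜 d}) :=
  Ideal.span_mono fun _ ha => ⟨Ideal.subset_span ha.1, ha.2⟩

lemma Kp_isHomogeneous : Ideal.IsHomogeneous 𝒜 (Kp 𝒜 G) :=
  Ideal.homogeneous_span 𝒜 _ fun _ hx => ⟨hx.1.choose, hx.1.choose_spec.2⟩

/-- The ideal of `A[x_g]` generated by the invariant homogeneous positive-degree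
elements of `A`. -/
noncomputable def Jp (G : Type) [Group G] [MulSemiringAction G A] : Ideal (MvPolynomial G A) :=
  Ideal.span ((MvPolynomial.C : A →+* MvPolynomial G A) '' (Kp 𝒜 G : Set A))

lemma coeff_mem_Kp_of_mem_Jp {x : MvPolynomial G A} (hx : x ∈ Jp 𝒜 G) (ν : G →₀ ℕ) :
    coeff ν x ∈ Kp 𝒜 G := by
  classical
  refine Submodule.span_induction
    (p := fun y _ => ∀ ν : G →₀ ℕ, coeff ν y ∈ Kp 𝒜 G) ?_ ?_ ?_ ?_ hx ν
  · rintro y ⟨z, hz, rfl⟩ ν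
    rw [MvPolynomial.coeff_C]
    split
    · exact hz
    · exact zero_mem _
  · intro ν; simp only [MvPolynomial.coeff_zero]; exact zero_mem _
  · intro y z _ _ hy hz ν
    rw [MvPolynomial.coeff_add]; exact add_mem (hy ν) (hz ν)
  · intro r y _ hy ν
    rw [smul_eq_mul, MvPolynomial.coeff_mul]
    exact Submodule.sum_mem _ fun c _ => Ideal.mul_mem_left _ _ (hy c.2)

/-- The subring of polynomials all whose coefficients have `𝒜`-components of degree at
most `(n-1)` times the degree of the corresponding monomial. -/
def lowRing (n : ℕ) : Subring (MvPolynomial G A) where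
  carrier := {p | ∀ (μ : G →₀ ℕ) (c : ℕ), n * mdeg μ < c + mdeg μ →
    GradedRing.proj 𝒜 c (coeff μ p) = 0}
  zero_mem' := by intro μ c _; rw [MvPolynomial.coeff_zero, map_zero]
  one_mem' := by
    classical
    intro μ c hc
    rw [MvPolynomial.coeff_one]
    split
    · next h =>
      subst h
      rw [mdeg_zero] at hc
      rw [GradedRing.proj_apply,
        DirectSum.decompose_of_mem_ne 𝒜 (SetLike.one_mem_graded 𝒜) (by omega)]
    · rw [map_zero]
  add_mem' := by
    intro p q hp hq μ c hc
    rw [MvPolynomial.coeff_add, map_add, hp μ c hc, hq μ c hc, add_zero]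
  neg_mem' := by
    intro p hp μ c hc
    rw [MvPolynomial.coeff_neg, map_neg, hp μ c hc, neg_zero]
  mul_mem' := by
    classical
    intro p q hp hq μ c hc
    rw [MvPolynomial.coeff_mul, map_sum]
    refine Finset.sum_eq_zero fun x hx => ?_
    have hxy : x.1 + x.2 = μ := Finset.HasAntidiagonal.mem_antidiagonal.mp hx
    set a := coeff x.1 p with ha
    set b := coeff x.2 q with hb
    have hA : a * b = ∑ i ∈ (DirectSum.decompose 𝒜 a).support,
        ∑ j ∈ (DirectSum.decompose 𝒜 b).support,
        (DirectSum.decompose 𝒜 a i : A) * (DirectSum.decompose 𝒜 b j : A) := by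
      rw [← Finset.sum_mul_sum, DirectSum.sum_support_decompose 𝒜 a,
        DirectSum.sum_support_decompose 𝒜 b]
    rw [hA, map_sum]
    refine Finset.sum_eq_zero fun i hi => ?_
    rw [map_sum]
    refine Finset.sum_eq_zero fun j hj => ?_
    have hia : i + mdeg x.1 ≤ n * mdeg x.1 := by
      by_contra hlt
      push_neg at hlt
      have h0 := hp x.1 i hlt
      rw [GradedRing.proj_apply] at h0
      exact (DFinsupp.mem_support_iff.mp hi) (by exact_mod_cast Subtype.ext h0)
    have hjb : j + mdeg x.2 ≤ n * mdeg x.2 := by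
      by_contra hlt
      push_neg at hlt
      have h0 := hq x.2 j hlt
      rw [GradedRing.proj_apply] at h0
      exact (DFinsupp.mem_support_iff.mp hj) (by exact_mod_cast Subtype.ext h0)
    have hmem : (DirectSum.decompose 𝒜 a i : A) * (DirectSum.decompose 𝒜 b j : A)
        ∈ 𝒜 (i + j) := SetLike.mul_mem_graded (SetLike.coe_mem _) (SetLike.coe_mem _)
    have hmdeg : mdeg μ = mdeg x.1 + mdeg x.2 := by rw [← hxy, mdeg_add]
    have hnm : n * mdeg μ = n * mdeg x.1 + n * mdeg x.2 := by rw [hmdeg, Nat.mul_add]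
    rw [GradedRing.proj_apply, DirectSum.decompose_of_mem_ne 𝒜 hmem (by omega)]

/-- The auxiliary subring `W = lowRing + Jp`. -/
def Wring (n : ℕ) (G : Type) [Group G] [MulSemiringAction G A] : Subring (MvPolynomial G A) where
  carrier := {p : MvPolynomial G A | ∃ u ∈ lowRing 𝒜 n, p - u ∈ Jp 𝒜 G}
  zero_mem' := ⟨0, zero_mem _, by rw [sub_self]; exact zero_mem _⟩
  one_mem' := ⟨1, one_mem _, by rw [sub_self]; exact zero_mem _⟩
  add_mem' := by
    rintro a b ⟨u, hu, hau⟩ ⟨v, hv, hbv⟩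
    refine ⟨u + v, add_mem hu hv, ?_⟩
    have h : a + b - (u + v) = (a - u) + (b - v) := by ring
    rw [h]; exact add_mem hau hbv
  neg_mem' := by
    rintro a ⟨u, hu, hau⟩
    refine ⟨-u, neg_mem hu, ?_⟩
    have h : -a - -u = -(a - u) := by ring
    rw [h]; exact neg_mem hau
  mul_mem' := by
    rintro a b ⟨u, hu, hau⟩ ⟨v, hv, hbv⟩
    refine ⟨u * v, mul_mem hu hv, ?_⟩
    have h : a * b - u * v = (a - u) * b + u * (b - v) := by ring
    rw [h]
    exact add_mem (Ideal.mul_mem_right _ _ hau) (Ideal.mul_mem_left _ _ hbv)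

lemma mem_Wring_iff (n : ℕ) (p : MvPolynomial G A) :
    p ∈ Wring 𝒜 n G ↔ ∃ u ∈ lowRing 𝒜 n, p - u ∈ Jp 𝒜 G := Iff.rfl

/-- Key decomposition: elements of the generating set of the invariant ring lie in `W`. -/
lemma S_subset_W {n : ℕ} :
    {p : MvPolynomial G A | p ∈ fixedSubringOf (AGmap (G := G) (A := A)) ∧
        ∃ d ≤ n, p ∈ AGgrading 𝒜 d} ⊆ (Wring 𝒜 n G : Set (MvPolynomial G A)) := by
  classical
  rintro p ⟨hpB, d, hdn, hpd⟩
  have hp' : p ∈ AddSubgroup.closure {q : MvPolynomial G A |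
      ∃ (d₀ : ℕ) (a : A) (μ : G →₀ ℕ), a ∈ 𝒜 d₀ ∧ d₀ + μ.sum (fun _ e => e) = d ∧
        q = MvPolynomial.monomial μ a} := hpd
  have key : ∀ μ : G →₀ ℕ, coeff μ p ∈ 𝒜 (d - mdeg μ) ∧ (d < mdeg μ → coeff μ p = 0) := by
    refine AddSubgroup.closure_induction
      (p := fun q _ => ∀ μ : G →₀ ℕ,
        coeff μ q ∈ 𝒜 (d - mdeg μ) ∧ (d < mdeg μ → coeff μ q = 0)) ?_ ?_ ?_ ?_ hp'
    · rintro q ⟨d₀, a, μ₀, ha, hsum, rfl⟩ μ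
      rw [coeff_monomial]
      split
      · next heq =>
        subst heq
        have hsum' : d₀ + mdeg μ₀ = d := hsum
        constructor
        · have h : d - mdeg μ₀ = d₀ := by omega
          rw [h]; exact ha
        · intro hlt; omega
      · exact ⟨zero_mem _, fun _ => rfl⟩
    · intro μ
      exact ⟨by rw [MvPolynomial.coeff_zero]; exact zero_mem _,
        fun _ => MvPolynomial.coeff_zero μ⟩
    · intro x y _ _ hx hy μ
      rw [MvPolynomial.coeff_add]
      exact ⟨add_mem (hx μ).1 (hy μ).1,
        fun h => by rw [(hx μ).2 h, (hy μ).2 h, add_zero]⟩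
    · intro x _ hx μ
      rw [MvPolynomial.coeff_neg]
      exact ⟨neg_mem (hx μ).1, fun h => by rw [(hx μ).2 h, neg_zero]⟩
  set p0 := constantCoeff p with hp0
  have hcoeff0 : coeff 0 p = p0 := by rw [hp0, MvPolynomial.constantCoeff_eq]
  have hp0A : p0 ∈ 𝒜 d := by
    have h := (key 0).1
    rw [mdeg_zero, Nat.sub_zero, hcoeff0] at h
    exact h
  have hp0inv : ∀ g : G, g • p0 = p0 := by
    intro g
    conv_rhs => rw [hp0, ← hpB g, constantCoeff_AGmap]
  have hlowpart : p - MvPolynomial.C p0 ∈ lowRing 𝒜 n := by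
    intro μ c hc
    rw [MvPolynomial.coeff_sub, MvPolynomial.coeff_C]
    by_cases hμ : μ = 0
    · subst hμ
      rw [if_pos rfl, hcoeff0, sub_self, map_zero]
    · rw [if_neg (fun h => hμ h.symm), sub_zero]
      have hμ1 : 1 ≤ mdeg μ := mdeg_pos_of_ne_zero hμ
      by_cases hle : mdeg μ ≤ d
      · by_cases hcd : c = d - mdeg μ
        · exfalso
          have h1 : n ≤ n * mdeg μ := Nat.le_mul_of_pos_right n hμ1
          omega
        · rw [GradedRing.proj_apply, DirectSum.decompose_of_mem_ne 𝒜 (key μ).1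
            (fun h => hcd h.symm)]
      · rw [(key μ).2 (by omega), map_zero]
  by_cases hd : 1 ≤ d
  · refine ⟨p - MvPolynomial.C p0, hlowpart, ?_⟩
    have h : p - (p - MvPolynomial.C p0) = MvPolynomial.C p0 := by ring
    rw [h]
    exact Ideal.subset_span ⟨p0, Ideal.subset_span ⟨⟨d, hd, hp0A⟩, hp0inv⟩, rfl⟩
  · have hd0 : d = 0 := by omega
    subst hd0
    have hC : (MvPolynomial.C p0 : MvPolynomial G A) ∈ lowRing 𝒜 n := by
      intro μ c hc
      rw [MvPolynomial.coeff_C]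
      by_cases hμ : μ = 0
      · subst hμ
        rw [if_pos rfl]
        rw [mdeg_zero] at hc
        rw [GradedRing.proj_apply, DirectSum.decompose_of_mem_ne 𝒜 hp0A (by omega)]
      · rw [if_neg (fun h => hμ h.symm), map_zero]
    refine ⟨p, ?_, by rw [sub_self]; exact zero_mem _⟩
    have h := add_mem hlowpart hC
    rwa [sub_add_cancel] at h

variable [Fintype G]

lemma M_mem_fixed (w : A) :
    (∑ g : G, monomial (Finsupp.single g 1) (g • w)) ∈
      fixedSubringOf (AGmap (G := G) (A := A)) := by
  intro h
  rw [map_sum]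
  have e1 : (∑ g : G, AGmap h (monomial (Finsupp.single g 1) (g • w)))
      = ∑ g : G, monomial (Finsupp.single (h * g) 1) ((h * g) • w) :=
    Finset.sum_congr rfl fun g _ => by
      rw [AGmap_monomial, Finsupp.mapDomain_single, ← mul_smul]
  rw [e1]
  exact Fintype.sum_bijective (fun g : G => h * g) (Equiv.mulLeft h).bijective
    (fun g => monomial (Finsupp.single (h * g) 1) ((h * g) • w))
    (fun g => monomial (Finsupp.single g 1) (g • w)) (fun g => rfl)

/-- Main lemma: products of `n` positive-degree homogeneous elements lie in `Kp`. -/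
lemma prod_mem_Kp {n : ℕ}
    (hn : fixedSubringOf (AGmap (G := G) (A := A)) ≤
      Subring.closure {p : MvPolynomial G A |
        p ∈ fixedSubringOf (AGmap (G := G) (A := A)) ∧ ∃ d ≤ n, p ∈ AGgrading 𝒜 d})
    (f : Fin n → A) (df : Fin n → ℕ) (hdf : ∀ i, 1 ≤ df i)
    (hf : ∀ i, f i ∈ 𝒜 (df i)) : (∏ i, f i) ∈ Kp 𝒜 G := by
  classical
  set E := ∑ i, df i with hE'
  set w := ∏ i, f i with hw'
  have hw : w ∈ 𝒜 E := SetLike.prod_mem_graded 𝒜 df f fun i _ => hf i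
  have hE : n ≤ E := by
    calc n = ∑ _i : Fin n, 1 := by simp
      _ ≤ E := Finset.sum_le_sum fun i _ => hdf i
  set M := ∑ g : G, monomial (Finsupp.single g 1) (g • w) with hM'
  have hMB : M ∈ fixedSubringOf (AGmap (G := G) (A := A)) := M_mem_fixed (G := G) w
  have hW : Subring.closure {p : MvPolynomial G A |
      p ∈ fixedSubringOf (AGmap (G := G) (A := A)) ∧ ∃ d ≤ n, p ∈ AGgrading 𝒜 d} ≤
      Wring 𝒜 n G := by
    rw [Subring.closure_le]
    exact S_subset_W 𝒜
  obtain ⟨u, hu, hJ⟩ := hW (hn hMB)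
  have hcoeffM : coeff (Finsupp.single (1 : G) 1) M = w := by
    rw [hM', coeff_sum]
    have e1 : ∀ g : G, coeff (Finsupp.single (1 : G) 1)
        (monomial (Finsupp.single g 1) (g • w)) = if g = 1 then g • w else 0 := by
      intro g
      rw [coeff_monomial]
      congr 1
      exact propext (Finsupp.single_left_inj one_ne_zero)
    rw [Finset.sum_congr rfl fun g _ => e1 g, Finset.sum_ite_eq' Finset.univ (1 : G)]
    simp
  have hu0 : GradedRing.proj 𝒜 E (coeff (Finsupp.single (1 : G) 1) u) = 0 := by
    apply hu
    rw [mdeg_single]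
    omega
  have hsplit : coeff (Finsupp.single (1 : G) 1) M =
      coeff (Finsupp.single (1 : G) 1) (M - u) + coeff (Finsupp.single (1 : G) 1) u := by
    rw [← MvPolynomial.coeff_add, sub_add_cancel]
  have hfinal : GradedRing.proj 𝒜 E (coeff (Finsupp.single (1 : G) 1) M) ∈ Kp 𝒜 G := by
    rw [hsplit, map_add, hu0, add_zero]
    have hc : coeff (Finsupp.single (1 : G) 1) (M - u) ∈ Kp 𝒜 G :=
      coeff_mem_Kp_of_mem_Jp 𝒜 hJ _
    rw [GradedRing.proj_apply]
    exact Kp_isHomogeneous 𝒜 E hc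
  rw [hcoeffM, GradedRing.proj_apply, DirectSum.decompose_of_mem_same 𝒜 hw] at hfinal
  exact hfinal

end EtaBetaAux

open Pointwise

/-- Let `A` be a commutative `ℕ`-graded ring with an action of a
finite group `G` by degree-preserving ring automorphisms and let `m = A_{≥1}`.
Then `η_G(m) ≤ β(A(G)^G)`, where `A(G)` is the polynomial ring over `A` in variables
`x_g (g ∈ G)` of degree `1`, with `G` acting through its action on `A` together with
`g • x_h = x_{gh}`, and `A(G)^G` carries the induced grading. -/
theorem eta_le_beta_AG {G A : Type} [Group G] [Finite G] [CommRing A]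
    [MulSemiringAction G A] (𝒜 : ℕ → AddSubgroup A) [GradedRing 𝒜]
    (hdeg : ∀ (g : G) (d : ℕ), ∀ a ∈ 𝒜 d, g • a ∈ 𝒜 d) :
    eta G (Ideal.span {a : A | ∃ d, 1 ≤ d ∧ a ∈ 𝒜 d}) ≤
      beta (AGgrading 𝒜) (fixedSubringOf (AGmap (G := G) (A := A))) := by
  classical
  haveI := Fintype.ofFinite G
  rw [eta, beta]
  apply sInf_le_sInf
  apply Set.image_mono
  intro n hn
  simp only [Set.mem_setOf_eq] at hn ⊢
  set m : Ideal A := Ideal.span {a : A | ∃ d, 1 ≤ d ∧ a ∈ 𝒜 d} with hm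
  have pow_le : ∀ N : ℕ, m ^ N ≤ Ideal.span {w : A | ∃ (f : Fin N → A) (df : Fin N → ℕ),
      (∀ i, 1 ≤ df i) ∧ (∀ i, f i ∈ 𝒜 (df i)) ∧ w = ∏ i, f i} := by
    intro N
    induction N with
    | zero =>
      have h1 : (1 : A) ∈ {w : A | ∃ (f : Fin 0 → A) (df : Fin 0 → ℕ),
          (∀ i, 1 ≤ df i) ∧ (∀ i, f i ∈ 𝒜 (df i)) ∧ w = ∏ i, f i} :=
        ⟨Fin.elim0, Fin.elim0, fun i => i.elim0, fun i => i.elim0, by simp⟩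
      have h2 : Ideal.span {w : A | ∃ (f : Fin 0 → A) (df : Fin 0 → ℕ),
          (∀ i, 1 ≤ df i) ∧ (∀ i, f i ∈ 𝒜 (df i)) ∧ w = ∏ i, f i} = ⊤ :=
        (Ideal.eq_top_iff_one _).mpr (Ideal.subset_span h1)
      rw [pow_zero, Ideal.one_eq_top, h2]
    | succ N ih =>
      rw [pow_succ]
      calc m ^ N * m
          ≤ Ideal.span {w : A | ∃ (f : Fin N → A) (df : Fin N → ℕ),
              (∀ i, 1 ≤ df i) ∧ (∀ i, f i ∈ 𝒜 (df i)) ∧ w = ∏ i, f i} *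
            Ideal.span {a : A | ∃ d, 1 ≤ d ∧ a ∈ 𝒜 d} :=
            Ideal.mul_mono ih le_rfl
        _ = Ideal.span ({w : A | ∃ (f : Fin N → A) (df : Fin N → ℕ),
              (∀ i, 1 ≤ df i) ∧ (∀ i, f i ∈ 𝒜 (df i)) ∧ w = ∏ i, f i} *
            {a : A | ∃ d, 1 ≤ d ∧ a ∈ 𝒜 d}) := Ideal.span_mul_span' _ _
        _ ≤ _ := by
            apply Ideal.span_mono
            rintro x ⟨w, ⟨f, df, h1, h2, rfl⟩, s, ⟨d, hd1, hsd⟩, rfl⟩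
            refine ⟨Fin.cons s f, Fin.cons d df, ?_, ?_, ?_⟩
            · intro i
              refine Fin.cases ?_ ?_ i <;> simp [hd1, h1]
            · intro i
              refine Fin.cases ?_ ?_ i <;> simp [hsd, h2]
            · rw [Fin.prod_cons, mul_comm]
  calc m ^ n ≤ Ideal.span {w : A | ∃ (f : Fin n → A) (df : Fin n → ℕ),
        (∀ i, 1 ≤ df i) ∧ (∀ i, f i ∈ 𝒜 (df i)) ∧ w = ∏ i, f i} := pow_le n
    _ ≤ Kp 𝒜 G := by
        rw [Ideal.span_le]
        rintro x ⟨f, df, h1, h2, rfl⟩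
        exact prod_mem_Kp 𝒜 hn f df h1 h2
    _ ≤ invIdeal G m := Kp_le_invIdeal 𝒜
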